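/- Every complex eigenvalue λ of the matrix A := A₃·A₂·A₁ (viewed as a matrix over ℂ) satisfies |λ| = 1 if and only if Δ₁² + Δ₂² + Δ₃² − Δ₁Δ₂Δ₃ ∈ {0, 1, 2, 3, 4}. -/

import Mathlib

open Matrix Polynomial

/-- The matrix `A_j` with rows `(0,1,0)`, `(0,0,1)`, `(1, −Δ_j, Δ_{j+2})`. -/
def helixMatrix (Δ : ℤ → ℤ) (j : ℤ) : Matrix (Fin 3) (Fin 3) ℤ :=
  !![0, 1, 0; 0, 0, 1; 1, -Δ j, Δ (j + 2)]

/-- The matrix `A := A₃ * A₂ * A₁`. -/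
def helixA (Δ : ℤ → ℤ) : Matrix (Fin 3) (Fin 3) ℤ :=
  helixMatrix Δ 3 * helixMatrix Δ 2 * helixMatrix Δ 1

private lemma helix_charpoly_eval (a b c : ℤ) (lam : ℂ) :
    ((!![1, -a, c;
      a, 1 - a^2, a*c - b;
      a*b - c, b + a*c - a^2*b, 1 - b^2 - c^2 + a*b*c] : Matrix (Fin 3) (Fin 3) ℤ).map
        (Int.cast : ℤ → ℂ)).charpoly.eval lam
      = (lam - 1) * (lam^2 - ((2 - (a^2+b^2+c^2-a*b*c) : ℤ) : ℂ)*lam + 1) := by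
  rw [Matrix.charpoly, ← Polynomial.coe_evalRingHom, RingHom.map_det, Matrix.det_fin_three]
  simp [charmatrix_apply, Matrix.map_apply, Matrix.one_apply]
  ring

private lemma quad_root_abs_one (cc : ℤ) (hcc : -2 ≤ cc ∧ cc ≤ 2) (lam : ℂ)
    (h2 : lam^2 - ((cc : ℤ) : ℂ)*lam + 1 = 0) : ‖lam‖ = 1 := by
  have hconj : (starRingEnd ℂ) lam ^ 2 - ((cc : ℤ) : ℂ) * (starRingEnd ℂ) lam + 1 = 0 := by
    have h := congrArg (starRingEnd ℂ) h2
    simpa only [map_sub, map_add, map_pow, _root_.map_mul, _root_.map_one, map_zero,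
      map_intCast] using h
  have hsplit : (lam - (starRingEnd ℂ) lam) * (lam + (starRingEnd ℂ) lam - ((cc : ℤ) : ℂ)) = 0 := by
    linear_combination h2 - hconj
  rcases mul_eq_zero.1 hsplit with h3 | h3
  · -- lam is real
    have hre : lam = (lam.re : ℂ) := by
      have : (starRingEnd ℂ) lam = lam := by linear_combination -h3
      exact (Complex.conj_eq_iff_re.1 this).symm
    set x : ℝ := lam.re with hx
    have hxeq : x^2 - ((cc : ℤ) : ℝ)*x + 1 = 0 := by
      have h := h2
      rw [hre] at h
      exact_mod_cast h
    have hc2 : ((cc : ℤ) : ℝ)^2 ≤ 4 := by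
      have h1 : (-2 : ℝ) ≤ ((cc : ℤ) : ℝ) := by exact_mod_cast hcc.1
      have h2' : ((cc : ℤ) : ℝ) ≤ 2 := by exact_mod_cast hcc.2
      nlinarith
    have h4 : (2*x - ((cc : ℤ) : ℝ))^2 = ((cc : ℤ) : ℝ)^2 - 4 := by
      linear_combination 4*hxeq
    have h5 : ((cc : ℤ) : ℝ)^2 = 4 := by nlinarith [sq_nonneg (2*x - ((cc : ℤ) : ℝ))]
    have h6 : 2*x = ((cc : ℤ) : ℝ) := by nlinarith [sq_nonneg (2*x - ((cc : ℤ) : ℝ))]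
    have hx2 : x^2 = 1 := by nlinarith
    rw [hre, Complex.norm_real, Real.norm_eq_abs]
    nlinarith [abs_nonneg x, sq_abs x, sq_nonneg (|x| - 1), sq_nonneg (|x| + 1)]
  · have hmul : (starRingEnd ℂ) lam * lam = 1 := by
      linear_combination lam * h3 - h2
    have hns : Complex.normSq lam = 1 := by
      have : ((Complex.normSq lam : ℝ) : ℂ) = 1 := by
        rw [← Complex.mul_conj]; linear_combination hmul
      exact_mod_cast this
    rw [Complex.norm_def, hns, Real.sqrt_one]


/-- All complex eigenvalues of `A := A₃·A₂·A₁` have modulus 1 if and only if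
`Δ₁² + Δ₂² + Δ₃² − Δ₁Δ₂Δ₃ ∈ {0, 1, 2, 3, 4}`. -/
theorem helixA_eigenvalues_modulus_one (Δ : ℤ → ℤ) (hper : ∀ i : ℤ, Δ (i + 3) = Δ i) :
    (∀ lam : ℂ, ((helixA Δ).map (Int.cast : ℤ → ℂ)).charpoly.IsRoot lam →
        ‖lam‖ = 1) ↔
      Δ 1 ^ 2 + Δ 2 ^ 2 + Δ 3 ^ 2 - Δ 1 * Δ 2 * Δ 3 ∈ ({0, 1, 2, 3, 4} : Set ℤ) := by
  have hA : helixA Δ = !![1, -Δ 1, Δ 3;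
      Δ 1, 1 - Δ 1^2, Δ 1*Δ 3 - Δ 2;
      Δ 1*Δ 2 - Δ 3, Δ 2 + Δ 1*Δ 3 - Δ 1^2*Δ 2, 1 - Δ 2^2 - Δ 3^2 + Δ 1*Δ 2*Δ 3] := by
    have h4 : Δ (2 + 2) = Δ 1 := by rw [show (2:ℤ)+2 = 1+3 by norm_num, hper]
    have h5 : Δ (3 + 2) = Δ 2 := by rw [show (3:ℤ)+2 = 2+3 by norm_num, hper]
    have h3 : Δ (1 + 2) = Δ 3 := by norm_num
    unfold helixA helixMatrix
    rw [h3, h4, h5]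
    ext i j
    fin_cases i <;> fin_cases j <;> simp [Matrix.mul_apply, Fin.sum_univ_three] <;> ring
  have key : ∀ lam : ℂ, ((helixA Δ).map (Int.cast : ℤ → ℂ)).charpoly.eval lam
      = (lam - 1) * (lam^2 - ((2 - (Δ 1^2+Δ 2^2+Δ 3^2-Δ 1*Δ 2*Δ 3) : ℤ) : ℂ)*lam + 1) := by
    intro lam
    rw [hA]
    exact helix_charpoly_eval (Δ 1) (Δ 2) (Δ 3) lam
  constructor
  · intro h
    by_contra hmem
    simp only [Set.mem_insert_iff, Set.mem_singleton_iff] at hmem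
    push_neg at hmem
    set cc : ℤ := 2 - (Δ 1^2+Δ 2^2+Δ 3^2-Δ 1*Δ 2*Δ 3) with hccdef
    have hcc : 3 ≤ cc ∨ cc ≤ -3 := by omega
    have hs4 : (0:ℝ) ≤ (cc:ℝ)^2 - 4 := by
      rcases hcc with h1 | h1
      · have : (3:ℝ) ≤ (cc:ℝ) := by exact_mod_cast h1
        nlinarith
      · have : (cc:ℝ) ≤ -3 := by exact_mod_cast h1
        nlinarith
    set s : ℝ := Real.sqrt ((cc:ℝ)^2 - 4) with hs
    have hs2 : s^2 = (cc:ℝ)^2 - 4 := Real.sq_sqrt hs4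
    have hsnn : 0 ≤ s := Real.sqrt_nonneg _
    rcases hcc with h1 | h1
    · set x : ℝ := ((cc:ℝ) + s)/2 with hxdef
      have hroot : x^2 - (cc:ℝ)*x + 1 = 0 := by
        rw [hxdef]; linear_combination hs2/4
      have hIsRoot : ((helixA Δ).map (Int.cast : ℤ → ℂ)).charpoly.IsRoot (x : ℂ) := by
        show _ = 0
        rw [key]
        have hC : ((x:ℂ))^2 - ((cc : ℤ) : ℂ)*(x:ℂ) + 1 = 0 := by
          exact_mod_cast congrArg (fun t : ℝ => (t : ℂ)) hroot
        rw [hccdef] at hC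
        rw [hC, mul_zero]
      have habs := h (x : ℂ) hIsRoot
      rw [Complex.norm_real, Real.norm_eq_abs] at habs
      have h3r : (3:ℝ) ≤ (cc:ℝ) := by exact_mod_cast h1
      have hx32 : (3/2:ℝ) ≤ x := by rw [hxdef]; linarith
      have := le_abs_self x
      linarith
    · set x : ℝ := ((cc:ℝ) - s)/2 with hxdef
      have hroot : x^2 - (cc:ℝ)*x + 1 = 0 := by
        rw [hxdef]; linear_combination hs2/4
      have hIsRoot : ((helixA Δ).map (Int.cast : ℤ → ℂ)).charpoly.IsRoot (x : ℂ) := by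
        show _ = 0
        rw [key]
        have hC : ((x:ℂ))^2 - ((cc : ℤ) : ℂ)*(x:ℂ) + 1 = 0 := by
          exact_mod_cast congrArg (fun t : ℝ => (t : ℂ)) hroot
        rw [hccdef] at hC
        rw [hC, mul_zero]
      have habs := h (x : ℂ) hIsRoot
      rw [Complex.norm_real, Real.norm_eq_abs] at habs
      have h3r : (cc:ℝ) ≤ -3 := by exact_mod_cast h1
      have hx32 : x ≤ -(3/2:ℝ) := by rw [hxdef]; linarith
      have := neg_abs_le x
      linarith
  · intro hmem lam hroot
    have hev : (lam - 1) * (lam^2 - ((2 - (Δ 1^2+Δ 2^2+Δ 3^2-Δ 1*Δ 2*Δ 3) : ℤ) : ℂ)*lam + 1) = 0 := by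
      rw [← key lam]; exact hroot
    rcases mul_eq_zero.1 hev with h1 | h2
    · have : lam = 1 := by linear_combination h1
      simp [this]
    · refine quad_root_abs_one _ ?_ lam h2
      simp only [Set.mem_insert_iff, Set.mem_singleton_iff] at hmem
      omega
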